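/- arXiv:1607.03515 — 4 statements merged into one kernel-verified Lean document; each statement's English description precedes it below -/
import Mathlib

section
/- Let β be a Pisot number (an algebraic integer greater than 1 all of whose other Galois conjugates have modulus strictly less than 1), and let S ⊂ ℤ[β] be a finite set. Then there exists a constant c > 0 such that for any two elements y, z of the set Λ = { Σ_{i=0}^n a_i β^i : a_i ∈ S, n ∈ ℕ }, either y = z or |y − z| > c. -/
open Finset

lemma aux_geom_sum_le' {r : ℝ} (h0 : 0 ≤ r) (h1 : r < 1) (n : ℕ) :
    ∑ i ∈ Finset.range n, r ^ i ≤ (1 - r)⁻¹ := by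
  have hne : r ≠ 1 := ne_of_lt h1
  have hpos : 0 < 1 - r := by linarith
  rw [geom_sum_eq hne]
  have h2 : (r ^ n - 1) / (r - 1) = (1 - r ^ n) / (1 - r) := by
    rw [← neg_div_neg_eq]; ring_nf
  rw [h2, inv_eq_one_div]
  exact div_le_div₀ zero_le_one (by nlinarith [pow_nonneg h0 n]) hpos le_rfl

set_option maxHeartbeats 1000000 in
/-- **Separation for Pisot sums.** Let `β` be a Pisot number (a real algebraic integer
greater than 1, all of whose other conjugates, i.e. complex roots of its minimal
polynomial over `ℤ`, have modulus strictly less than 1), and let `S ⊆ ℤ[β]` be a finite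
set.  Then there is `c > 0` such that any two elements `y, z` of
`Λ = { ∑_{i=0}^n a_i β^i : a_i ∈ S }` are either equal or at distance more than `c`. -/
theorem pisot_sum_separation
    (β : ℝ) (hβint : IsIntegral ℤ β) (hβgt : 1 < β)
    (hconj : ∀ z : ℂ, Polynomial.aeval z (minpoly ℤ β) = 0 → z ≠ (β : ℂ) →
      ‖z‖ < 1)
    (S : Finset ℝ)
    (hS : (S : Set ℝ) ⊆ (Algebra.adjoin ℤ ({β} : Set ℝ) : Subalgebra ℤ ℝ)) :
    ∃ c : ℝ, 0 < c ∧
      ∀ y ∈ {x : ℝ | ∃ (n : ℕ) (a : ℕ → ℝ), (∀ i, a i ∈ S) ∧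
          x = ∑ i ∈ Finset.range (n + 1), a i * β ^ i},
      ∀ z ∈ {x : ℝ | ∃ (n : ℕ) (a : ℕ → ℝ), (∀ i, a i ∈ S) ∧
          x = ∑ i ∈ Finset.range (n + 1), a i * β ^ i},
        y = z ∨ c < |y - z| := by
  classical
  have hβQ : IsIntegral ℚ β := hβint.tower_top
  set K : IntermediateField ℚ ℝ := IntermediateField.adjoin ℚ {β} with hKdef
  haveI : FiniteDimensional ℚ K := IntermediateField.adjoin.finiteDimensional hβQ
  haveI : NumberField K := ⟨⟩
  have hβK : β ∈ K := IntermediateField.subset_adjoin ℚ {β} rfl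
  set b : K := ⟨β, hβK⟩ with hbdef
  -- adjoin ℤ {β} ⊆ K
  have hAK : ∀ x : ℝ, x ∈ Algebra.adjoin ℤ ({β} : Set ℝ) → x ∈ K := by
    intro x hx
    have hle : Algebra.adjoin ℤ ({β} : Set ℝ) ≤ Subalgebra.restrictScalars ℤ K.toSubalgebra := by
      rw [Algebra.adjoin_le_iff]
      intro t ht
      rw [Set.mem_singleton_iff] at ht
      subst ht
      exact hβK
    exact hle hx
  -- b is integral over ℤ
  have hbint : IsIntegral ℤ b := by
    rw [← isIntegral_algebraMap_iff (R := ℤ) (A := K) (B := ℝ)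
      (algebraMap K ℝ).injective]
    exact hβint
  -- minpoly of b equals minpoly of β
  have hminb : minpoly ℤ b = minpoly ℤ β := by
    have := minpoly.algHom_eq (K.val.toRingHom.toIntAlgHom)
      (fun x y h => Subtype.ext h) b
    exact this.symm
  -- every embedding sends b to a root of minpoly ℤ β
  have hrootφ : ∀ φ : K →+* ℂ, Polynomial.aeval (φ b) (minpoly ℤ β) = 0 := by
    intro φ
    have h0 : Polynomial.aeval b (minpoly ℤ β) = 0 := by
      rw [← hminb]; exact minpoly.aeval ℤ b
    have h1 := congrArg φ h0
    rw [map_zero] at h1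
    exact (Polynomial.aeval_algHom_apply φ.toIntAlgHom b _).trans h1
  have hcase : ∀ φ : K →+* ℂ, φ b = (β : ℂ) ∨ ‖φ b‖ < 1 := by
    intro φ
    by_cases h : φ b = (β : ℂ)
    · exact Or.inl h
    · right
      exact hconj (φ b) (hrootφ φ) h
  -- the standard embedding
  set ι : K →+* ℂ := Complex.ofRealHom.comp K.val.toRingHom with hιdef
  have hι : ∀ x : K, ι x = ((x : ℝ) : ℂ) := fun x => rfl
  have huniq : ∀ φ : K →+* ℂ, φ b = (β : ℂ) → φ = ι := by
    intro φ h
    have hext : φ.toRatAlgHom = ι.toRatAlgHom := by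
      apply IntermediateField.adjoin_algHom_ext
      intro x hx
      rw [Set.mem_singleton_iff] at hx
      subst hx
      show φ b = ι b
      rw [h, hι]
    exact RingHom.ext fun x => DFunLike.congr_fun hext x
  have hΛA : ∀ (n : ℕ) (a : ℕ → ℝ), (∀ i, a i ∈ S) →
      (∑ i ∈ Finset.range (n + 1), a i * β ^ i) ∈ Algebra.adjoin ℤ ({β} : Set ℝ) := by
    intro n a ha
    refine Subalgebra.sum_mem _ fun i _ => ?_
    have h1 : a i ∈ Algebra.adjoin ℤ ({β} : Set ℝ) := hS (ha i)
    have h2 : β ∈ Algebra.adjoin ℤ ({β} : Set ℝ) := Algebra.subset_adjoin rfl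
    exact mul_mem h1 (pow_mem h2 i)
  have hS' : ∀ x : ℝ, x ∈ S → x ∈ Algebra.adjoin ℤ ({β} : Set ℝ) := fun x hx => hS hx
  have hSK : ∀ x : ℝ, x ∈ S → x ∈ K := fun x hx => hAK x (hS' x hx)
  set G : (K →+* ℂ) → ℝ → ℝ := fun φ t => if h : t ∈ K then ‖φ ⟨t, h⟩‖ else 0 with hGdef
  have hGnonneg : ∀ φ t, 0 ≤ G φ t := by
    intro φ t
    rw [hGdef]
    dsimp only
    split
    · exact norm_nonneg _
    · exact le_rfl
  have hGval : ∀ (φ : K →+* ℂ) (x : ℝ) (hxK : x ∈ K), G φ x = ‖φ ⟨x, hxK⟩‖ := by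
    intro φ x hxK
    rw [hGdef]
    exact dif_pos hxK
  set M : ℝ := 1 + ∑ φ : K →+* ℂ, ∑ s ∈ S, G φ s with hMdef
  have hsum_nonneg : ∀ φ : K →+* ℂ, 0 ≤ ∑ s ∈ S, G φ s :=
    fun φ => Finset.sum_nonneg fun s _ => hGnonneg φ s
  have htot_nonneg : 0 ≤ ∑ φ : K →+* ℂ, ∑ s ∈ S, G φ s :=
    Finset.sum_nonneg fun φ _ => hsum_nonneg φ
  have hM1 : 1 ≤ M := by rw [hMdef]; linarith
  have hM : ∀ (φ : K →+* ℂ) (x : ℝ) (hx : x ∈ S) (hxK : x ∈ K), ‖φ ⟨x, hxK⟩‖ ≤ M := by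
    intro φ x hx hxK
    have h1 : G φ x ≤ ∑ s ∈ S, G φ s :=
      Finset.single_le_sum (fun s _ => hGnonneg φ s) hx
    have h2 : ∑ s ∈ S, G φ s ≤ ∑ φ' : K →+* ℂ, ∑ s ∈ S, G φ' s :=
      Finset.single_le_sum (fun φ' _ => hsum_nonneg φ') (Finset.mem_univ φ)
    rw [← hGval φ x hxK, hMdef]
    linarith
  set B : ℝ := 1 + ∑ φ : K →+* ℂ, (if ‖φ b‖ < 1 then 2 * M * (1 - ‖φ b‖)⁻¹ else 0) with hBdef
  have hterm_nonneg : ∀ φ : K →+* ℂ,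
      0 ≤ (if ‖φ b‖ < 1 then 2 * M * (1 - ‖φ b‖)⁻¹ else 0) := by
    intro φ
    split
    · rename_i h
      have : 0 ≤ (1 - ‖φ b‖)⁻¹ := inv_nonneg.mpr (by linarith)
      nlinarith
    · exact le_rfl
  have hB1 : 1 ≤ B := by
    have : 0 ≤ ∑ φ : K →+* ℂ, (if ‖φ b‖ < 1 then 2 * M * (1 - ‖φ b‖)⁻¹ else 0) :=
      Finset.sum_nonneg fun φ _ => hterm_nonneg φ
    rw [hBdef]; linarith
  have hBφ : ∀ φ : K →+* ℂ, ‖φ b‖ < 1 → 2 * M * (1 - ‖φ b‖)⁻¹ ≤ B := by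
    intro φ h
    have h1 := Finset.single_le_sum (fun φ' _ => hterm_nonneg φ') (Finset.mem_univ φ)
    rw [if_pos h] at h1
    rw [hBdef]; linarith
  have hΛbound : ∀ (n : ℕ) (a : ℕ → ℝ) (ha : ∀ i, a i ∈ S)
      (hyK : (∑ i ∈ Finset.range (n + 1), a i * β ^ i) ∈ K) (φ : K →+* ℂ), ‖φ b‖ < 1 →
      ‖φ ⟨∑ i ∈ Finset.range (n + 1), a i * β ^ i, hyK⟩‖ ≤ M * (1 - ‖φ b‖)⁻¹ := by
    intro n a ha hyK φ hφ
    have hrep : (⟨∑ i ∈ Finset.range (n + 1), a i * β ^ i, hyK⟩ : K)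
        = ∑ i ∈ Finset.range (n + 1), (⟨a i, hSK _ (ha i)⟩ : K) * b ^ i := by
      apply Subtype.ext
      rw [AddSubmonoidClass.coe_finset_sum]
      simp [MulMemClass.coe_mul, SubmonoidClass.coe_pow, hbdef]
    rw [hrep, map_sum]
    refine (norm_sum_le _ _).trans ?_
    have hle : ∀ i ∈ Finset.range (n + 1),
        ‖φ ((⟨a i, hSK _ (ha i)⟩ : K) * b ^ i)‖ ≤ M * ‖φ b‖ ^ i := by
      intro i _
      rw [map_mul, map_pow, norm_mul, norm_pow]
      exact mul_le_mul_of_nonneg_right (hM φ _ (ha i) _) (pow_nonneg (norm_nonneg _) i)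
    refine (Finset.sum_le_sum hle).trans ?_
    rw [← Finset.mul_sum]
    exact mul_le_mul_of_nonneg_left (aux_geom_sum_le' (norm_nonneg _) hφ _) (by linarith)
  have hT : {x : K | IsIntegral ℤ x ∧ ∀ φ : K →+* ℂ, ‖φ x‖ ≤ B}.Finite :=
    NumberField.Embeddings.finite_of_norm_le K ℂ B
  set F : Finset ℝ :=
    insert 1 ((hT.toFinset.image (fun x : K => |(x : ℝ)|)).filter (fun v => 0 < v)) with hFdef
  have hFne : F.Nonempty := ⟨1, Finset.mem_insert_self _ _⟩
  set m := F.min' hFne with hmdef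
  have hm1 : m ≤ 1 := Finset.min'_le _ _ (Finset.mem_insert_self _ _)
  have hmpos : 0 < m := by
    have hmF := Finset.min'_mem F hFne
    rcases Finset.mem_insert.mp hmF with h | h
    · rw [hmdef, h]; norm_num
    · exact (Finset.mem_filter.mp h).2

  refine ⟨m / 2, by linarith, ?_⟩
  rintro y ⟨n, a, ha, rfl⟩ z ⟨p, e, he, rfl⟩
  set Y := ∑ i ∈ Finset.range (n + 1), a i * β ^ i with hYdef
  set Z := ∑ i ∈ Finset.range (p + 1), e i * β ^ i with hZdef
  by_cases hyz : Y = Z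
  · exact Or.inl hyz
  right
  have hYA := hΛA n a ha
  have hZA := hΛA p e he
  have hYK : Y ∈ K := hAK _ hYA
  have hZK : Z ∈ K := hAK _ hZA
  have hdK : Y - Z ∈ K := sub_mem hYK hZK
  have habs : 0 < |Y - Z| := abs_pos.mpr (sub_ne_zero.mpr hyz)
  rcases le_or_gt |Y - Z| 1 with hsmall | hbig
  · -- the difference is a small algebraic integer, so it lies in the finite set
    set D : K := ⟨Y - Z, hdK⟩ with hDdef
    have hDsub : D = (⟨Y, hYK⟩ : K) - ⟨Z, hZK⟩ := by
      apply Subtype.ext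
      simp [hDdef]
    have hDint : IsIntegral ℤ D := by
      rw [← isIntegral_algebraMap_iff (R := ℤ) (A := K) (B := ℝ)
        (algebraMap K ℝ).injective]
      exact adjoin_le_integralClosure hβint (sub_mem hYA hZA)
    have hDbound : ∀ φ : K →+* ℂ, ‖φ D‖ ≤ B := by
      intro φ
      rcases hcase φ with h | h
      · rw [huniq φ h, hι]
        rw [Complex.norm_real, Real.norm_eq_abs]
        exact hsmall.trans hB1
      · rw [hDsub, map_sub]
        refine (norm_sub_le _ _).trans ?_
        have h1 : ‖φ (⟨Y, hYK⟩ : K)‖ ≤ M * (1 - ‖φ b‖)⁻¹ := hΛbound n a ha hYK φ h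
        have h2 : ‖φ (⟨Z, hZK⟩ : K)‖ ≤ M * (1 - ‖φ b‖)⁻¹ := hΛbound p e he hZK φ h
        have h3 := hBφ φ h
        have h4 : 2 * M * (1 - ‖φ b‖)⁻¹
            = M * (1 - ‖φ b‖)⁻¹ + M * (1 - ‖φ b‖)⁻¹ := by ring
        exact (add_le_add h1 h2).trans (h4 ▸ h3)
    have hDT : D ∈ hT.toFinset := by
      rw [Set.Finite.mem_toFinset]
      exact ⟨hDint, hDbound⟩
    have hmem : |Y - Z| ∈ F := by
      refine Finset.mem_insert_of_mem ?_
      rw [Finset.mem_filter]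
      exact ⟨Finset.mem_image.mpr ⟨D, hDT, rfl⟩, habs⟩
    have hle := Finset.min'_le _ _ hmem
    rw [← hmdef] at hle
    linarith
  · linarith
end

section
/- Consider the IFS {S_j(x) = x/d + j(d−1)/d : j = 0,…,k} on ℝ with k ≥ d−1 ≥ 2. For each n ≥ 1, the set of points {S_σ(0) mod 1 : σ ∈ {0,…,k}^n} ∪ {S_σ(k) mod 1 : σ ∈ {0,…,k}^n}, taken modulo 1, equals exactly { j/dⁿ : 0 ≤ j ≤ dⁿ − 1 }. -/
open Finset

private lemma digit_sum (d m : ℕ) : ∀ n : ℕ,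
    ∑ i ∈ range n, (m / d ^ i % d) * d ^ i = m % d ^ n := by
  intro n
  induction n with
  | zero => simp [Nat.mod_one]
  | succ n ih =>
    rw [Finset.sum_range_succ, ih, Nat.mod_pow_succ]
    ring

private lemma sum_eq_nat_div (d k n : ℕ) (hd : 3 ≤ d) (σ : Fin n → Fin (k + 1)) :
    ∑ i : Fin n, (σ i : ℝ) * ((d : ℝ) - 1) / (d : ℝ) ^ ((i : ℕ) + 1) =
      ((∑ i : Fin n, (σ i : ℕ) * (d - 1) * d ^ (n - 1 - (i : ℕ)) : ℕ) : ℝ) / (d : ℝ) ^ n := by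
  have hd0 : (0:ℝ) < (d:ℝ) := by positivity
  rw [eq_div_iff (by positivity), Finset.sum_mul]
  push_cast [Nat.cast_sub (by omega : 1 ≤ d)]
  refine Finset.sum_congr rfl fun i _ => ?_
  have hi : (i : ℕ) < n := i.isLt
  have hpow : (d : ℝ) ^ n = (d : ℝ) ^ ((i : ℕ) + 1) * (d : ℝ) ^ (n - 1 - (i : ℕ)) := by
    rw [← pow_add]; congr 1; omega
  rw [hpow]
  field_simp

private lemma coe_nat_div_mod (N D : ℕ) (hD : 0 < D) :
    (((N : ℝ) / (D : ℝ) : ℝ) : AddCircle (1:ℝ)) =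
      ((((N % D : ℕ) : ℝ) / (D : ℝ) : ℝ) : AddCircle (1:ℝ)) := by
  have hD' : (D : ℝ) ≠ 0 := by positivity
  have hNat : (N : ℝ) = ((N % D : ℕ) : ℝ) + (D : ℝ) * ((N / D : ℕ) : ℝ) := by
    exact_mod_cast (Nat.mod_add_div N D).symm
  have key : (N : ℝ) / (D : ℝ) = ((N % D : ℕ) : ℝ) / (D : ℝ) + ((N / D : ℕ) : ℝ) := by
    rw [hNat]; field_simp
  rw [key, AddCircle.coe_add]
  have : (((N / D : ℕ) : ℝ) : AddCircle (1:ℝ)) = 0 := by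
    rw [AddCircle.coe_eq_zero_iff]
    exact ⟨(N / D : ℕ), by rw [zsmul_eq_mul, mul_one, Int.cast_natCast]⟩
  rw [this, add_zero]

/-- Consider the IFS `S_j(x) = x/d + j(d-1)/d`, `j = 0, …, k`, with `k ≥ d - 1 ≥ 2`.
For each `n ≥ 1`, the images modulo `1` of the points `S_σ(0)` and `S_σ(k)`,
`σ ∈ {0,…,k}ⁿ` (where `S_σ(0) = ∑_{i=1}^n σ_i (d-1) d^{-i}` and
`S_σ(k) = S_σ(0) + k d^{-n}`), form exactly the set `{ j/dⁿ : 0 ≤ j ≤ dⁿ - 1 }`. -/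
theorem iterates_mod_one_eq_grid
    (d k : ℕ) (hd : 3 ≤ d) (hk : d - 1 ≤ k) (n : ℕ) (hn : 1 ≤ n) :
    (fun x : ℝ => (x : AddCircle (1 : ℝ))) ''
        ({x : ℝ | ∃ σ : Fin n → Fin (k + 1),
            x = ∑ i : Fin n, (σ i : ℝ) * ((d : ℝ) - 1) / (d : ℝ) ^ ((i : ℕ) + 1)} ∪
         {x : ℝ | ∃ σ : Fin n → Fin (k + 1),
            x = (∑ i : Fin n, (σ i : ℝ) * ((d : ℝ) - 1) / (d : ℝ) ^ ((i : ℕ) + 1)) +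
              (k : ℝ) / (d : ℝ) ^ n}) =
      {x : AddCircle (1 : ℝ) | ∃ j : ℕ, j < d ^ n ∧
        x = (((j : ℝ) / (d : ℝ) ^ n : ℝ) : AddCircle (1 : ℝ))} := by
  have hD : 0 < d ^ n := Nat.pow_pos (by omega)
  ext y
  constructor
  · rintro ⟨x, hx | hx, rfl⟩
    · obtain ⟨σ, rfl⟩ := hx
      refine ⟨(∑ i : Fin n, (σ i : ℕ) * (d - 1) * d ^ (n - 1 - (i : ℕ))) % d ^ n,
        Nat.mod_lt _ hD, ?_⟩
      have hD2 : ((d : ℝ) ^ n) = ((d ^ n : ℕ) : ℝ) := by push_cast; ring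
      rw [sum_eq_nat_div d k n hd σ, hD2]
      exact coe_nat_div_mod _ (d ^ n) hD
    · obtain ⟨σ, rfl⟩ := hx
      refine ⟨((∑ i : Fin n, (σ i : ℕ) * (d - 1) * d ^ (n - 1 - (i : ℕ))) + k) % d ^ n,
        Nat.mod_lt _ hD, ?_⟩
      have hD2 : ((d : ℝ) ^ n) = ((d ^ n : ℕ) : ℝ) := by push_cast; ring
      have hsum : (((∑ i : Fin n, (σ i : ℕ) * (d - 1) * d ^ (n - 1 - (i : ℕ))) : ℕ) : ℝ)
            / (d : ℝ) ^ n + (k : ℝ) / (d : ℝ) ^ n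
          = (((∑ i : Fin n, (σ i : ℕ) * (d - 1) * d ^ (n - 1 - (i : ℕ))) + k : ℕ) : ℝ)
            / (d : ℝ) ^ n := by
        push_cast; ring
      rw [sum_eq_nat_div d k n hd σ, hsum, hD2]
      exact coe_nat_div_mod _ (d ^ n) hD
  · rintro ⟨j, hj, rfl⟩
    haveI : NeZero (d ^ n) := ⟨hD.ne'⟩
    have hcop : Nat.Coprime (d - 1) (d ^ n) :=
      Nat.Coprime.pow_right _
        ((Nat.coprime_self_sub_left (by omega : 1 ≤ d)).mpr (Nat.coprime_one_left d))
    set u : (ZMod (d ^ n))ˣ := ZMod.unitOfCoprime (d - 1) hcop with hu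
    set m : ℕ := ((j : ZMod (d ^ n)) * ((u⁻¹ : (ZMod (d ^ n))ˣ) : ZMod (d ^ n))).val with hm
    have hmlt : m < d ^ n := ZMod.val_lt _
    have hmod : ((d - 1) * m) % (d ^ n) = j := by
      have h1 : (((d - 1) * m : ℕ) : ZMod (d ^ n)) = (j : ZMod (d ^ n)) := by
        push_cast
        rw [hm, ZMod.natCast_val, ZMod.cast_id]
        have hcu : ((u : (ZMod (d ^ n))ˣ) : ZMod (d ^ n)) = ((d - 1 : ℕ) : ZMod (d ^ n)) :=
          ZMod.coe_unitOfCoprime _ _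
        calc ((d - 1 : ℕ) : ZMod (d ^ n)) * ((j : ZMod (d ^ n)) * ↑u⁻¹)
            = (j : ZMod (d ^ n)) * (↑u * ↑u⁻¹) := by rw [hcu]; ring
          _ = (j : ZMod (d ^ n)) := by rw [← Units.val_mul, mul_inv_cancel, Units.val_one, mul_one]
      have h2 := congrArg ZMod.val h1
      rwa [ZMod.val_natCast, ZMod.val_natCast, Nat.mod_eq_of_lt hj] at h2
    set σ : Fin n → Fin (k + 1) := fun i =>
      ⟨m / d ^ (n - 1 - (i : ℕ)) % d, lt_of_lt_of_le (Nat.mod_lt _ (by omega)) (by omega)⟩ with hσ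
    refine ⟨∑ i : Fin n, (σ i : ℝ) * ((d : ℝ) - 1) / (d : ℝ) ^ ((i : ℕ) + 1),
      Or.inl ⟨σ, rfl⟩, ?_⟩
    rw [sum_eq_nat_div d k n hd σ]
    have hNval : (∑ i : Fin n, (σ i : ℕ) * (d - 1) * d ^ (n - 1 - (i : ℕ))) = (d - 1) * m := by
      calc (∑ i : Fin n, (σ i : ℕ) * (d - 1) * d ^ (n - 1 - (i : ℕ)))
          = ∑ i : Fin n, (d - 1) * ((m / d ^ (n - 1 - (i : ℕ)) % d) * d ^ (n - 1 - (i : ℕ))) :=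
            Finset.sum_congr rfl (fun i _ => by simp only [hσ]; ring)
        _ = ∑ i ∈ range n, (d - 1) * ((m / d ^ (n - 1 - i) % d) * d ^ (n - 1 - i)) :=
            Fin.sum_univ_eq_sum_range
              (fun i => (d - 1) * (m / d ^ (n - 1 - i) % d * d ^ (n - 1 - i))) n
        _ = (d - 1) * ∑ i ∈ range n, (m / d ^ (n - 1 - i) % d) * d ^ (n - 1 - i) :=
            (Finset.mul_sum _ _ _).symm
        _ = (d - 1) * ∑ i ∈ range n, (m / d ^ i % d) * d ^ i := by
            rw [Finset.sum_range_reflect fun i => (m / d ^ i % d) * d ^ i]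
        _ = (d - 1) * m := by rw [digit_sum, Nat.mod_eq_of_lt hmlt]
    have hD2 : ((d : ℝ) ^ n) = ((d ^ n : ℕ) : ℝ) := by push_cast; ring
    have hfin := coe_nat_div_mod ((d - 1) * m) (d ^ n) hD
    rw [hmod] at hfin
    rw [hNval, hD2]
    exact hfin
end

section
/- Let d ≥ 3, k ≥ d−1, and T(0), T(d−1) be the k×k primitive transition matrices (as defined via T(ℓ)_{ji} = p_s when s = (ℓ − (i−1) + (j−1)d)/(d−1) ∈ {0,…,k}, with all probabilities p_s > 0). Then for all indices i, j with j ≡ i (mod d−1), the (i,j) entry of (T(0)·T(d−1))^k is strictly positive. -/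
open Finset

/-- Let `d ≥ 3`, `k ≥ d - 1`, and let `T(0)` and `T(d-1)` be the `k × k` primitive
transition matrices given by `T(ℓ)_{ji} = p_s` when `s = (ℓ - (i-1) + (j-1)d)/(d-1)`
is an integer in `{0, …, k}` (and `0` otherwise), where all `p_s > 0`.  Then for all
indices `i, j` with `j ≡ i (mod d-1)`, the `(i,j)` entry of `(T(0)·T(d-1))^k` is
strictly positive. -/
theorem pow_prod_transition_pos
    (d k : ℕ) (hd : 3 ≤ d) (hk : d - 1 ≤ k)
    (p : ℕ → ℝ) (hp : ∀ j ≤ k, 0 < p j)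
    (T : ℕ → Matrix (Fin k) (Fin k) ℝ)
    (hT1 : ∀ ℓ : ℕ, ∀ j i : Fin k, ∀ s : ℕ, s ≤ k →
      (s : ℤ) * ((d : ℤ) - 1) = (ℓ : ℤ) - (i : ℕ) + (j : ℕ) * d → T ℓ j i = p s)
    (hT2 : ∀ ℓ : ℕ, ∀ j i : Fin k,
      (¬ ∃ s : ℕ, s ≤ k ∧ (s : ℤ) * ((d : ℤ) - 1) = (ℓ : ℤ) - (i : ℕ) + (j : ℕ) * d) →
      T ℓ j i = 0) :
    ∀ i j : Fin k, (i : ℕ) % (d - 1) = (j : ℕ) % (d - 1) →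
      0 < ((T 0 * T (d - 1)) ^ k) i j := by
  intro i j hij
  set m := d - 1 with hmdef
  have hm2 : 2 ≤ m := by omega
  have hmz : (m : ℤ) = (d : ℤ) - 1 := by omega
  -- all entries of T are nonnegative
  have hT0 : ∀ ℓ : ℕ, ∀ a b : Fin k, 0 ≤ T ℓ a b := by
    intro ℓ a b
    by_cases h : ∃ s : ℕ, s ≤ k ∧ (s : ℤ) * ((d : ℤ) - 1) = (ℓ : ℤ) - (b : ℕ) + (a : ℕ) * d
    · obtain ⟨s, hs, he⟩ := h
      rw [hT1 ℓ a b s hs he]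
      exact (hp s hs).le
    · rw [hT2 ℓ a b h]
  set M := T 0 * T m with hM
  have hMnn : ∀ a b : Fin k, 0 ≤ M a b := by
    intro a b
    rw [hM, Matrix.mul_apply]
    exact Finset.sum_nonneg fun c _ => mul_nonneg (hT0 0 a c) (hT0 m c b)
  have hMge : ∀ a b c : Fin k, T 0 a c * T m c b ≤ M a b := by
    intro a b c
    rw [hM, Matrix.mul_apply]
    exact Finset.single_le_sum (f := fun x => T 0 a x * T m x b)
      (fun x _ => mul_nonneg (hT0 0 a x) (hT0 m x b)) (mem_univ c)
  -- diagonal entries of M are positive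
  have hdiag : ∀ a : Fin k, 0 < M a a := by
    intro a
    have h1 : T 0 a a = p (a : ℕ) := by
      apply hT1 0 a a (a : ℕ) a.isLt.le
      push_cast; ring
    have h2 : T m a a = p ((a : ℕ) + 1) := by
      apply hT1 m a a ((a : ℕ) + 1) a.isLt
      push_cast; rw [hmz]; ring
    have := mul_pos (hp (a : ℕ) a.isLt.le) (hp ((a : ℕ) + 1) a.isLt)
    calc (0 : ℝ) < T 0 a a * T m a a := by rw [h1, h2]; exact this
      _ ≤ M a a := hMge a a a
  -- step up by m
  have hup : ∀ a b : Fin k, (b : ℕ) = (a : ℕ) + m → 0 < M a b := by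
    intro a b hb
    have h1 : T 0 a a = p (a : ℕ) := by
      apply hT1 0 a a (a : ℕ) a.isLt.le
      push_cast; ring
    have h2 : T m a b = p (a : ℕ) := by
      apply hT1 m a b (a : ℕ) a.isLt.le
      rw [hb]; push_cast; rw [hmz]; ring
    have := mul_pos (hp (a : ℕ) a.isLt.le) (hp (a : ℕ) a.isLt.le)
    calc (0 : ℝ) < T 0 a a * T m a b := by rw [h1, h2]; exact this
      _ ≤ M a b := hMge a b a
  -- step down by m
  have hdown : ∀ a b : Fin k, (a : ℕ) = (b : ℕ) + m → 0 < M a b := by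
    intro a b ha
    have hbd : (b : ℕ) + d ≤ k := by have := a.isLt; omega
    have h1 : T 0 a b = p ((b : ℕ) + d) := by
      apply hT1 0 a b ((b : ℕ) + d) hbd
      rw [ha]; push_cast; rw [hmz]; ring
    have h2 : T m b b = p ((b : ℕ) + 1) := by
      apply hT1 m b b ((b : ℕ) + 1) b.isLt
      push_cast; rw [hmz]; ring
    have := mul_pos (hp ((b : ℕ) + d) hbd) (hp ((b : ℕ) + 1) b.isLt)
    calc (0 : ℝ) < T 0 a b * T m b b := by rw [h1, h2]; exact this
      _ ≤ M a b := hMge a b b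
  -- powers of M are nonnegative
  have hpow : ∀ n : ℕ, ∀ a b : Fin k, 0 ≤ (M ^ n) a b := by
    intro n
    induction n with
    | zero =>
      intro a b
      rw [pow_zero]
      by_cases h : a = b
      · rw [h, Matrix.one_apply_eq]; norm_num
      · rw [Matrix.one_apply_ne h]
    | succ n ih =>
      intro a b
      rw [pow_succ', Matrix.mul_apply]
      exact Finset.sum_nonneg fun c _ => mul_nonneg (hMnn a c) (ih c b)
  -- lower bound for powers
  have hple : ∀ n : ℕ, ∀ a b c : Fin k, M a c * (M ^ n) c b ≤ (M ^ (n + 1)) a b := by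
    intro n a b c
    rw [pow_succ', Matrix.mul_apply]
    exact Finset.single_le_sum (f := fun x => M a x * (M ^ n) x b)
      (fun x _ => mul_nonneg (hMnn a x) (hpow n x b)) (mem_univ c)
  -- key induction
  have key : ∀ n : ℕ, ∀ a b : Fin k, (a : ℕ) % m = (b : ℕ) % m →
      ((a : ℕ) - (b : ℕ)) + ((b : ℕ) - (a : ℕ)) ≤ n * m → 0 < (M ^ n) a b := by
    intro n
    induction n with
    | zero =>
      intro a b hab hle
      have hEq : a = b := Fin.ext (by omega)
      rw [hEq, pow_zero, Matrix.one_apply_eq]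
      norm_num
    | succ n ih =>
      intro a b hab hle
      obtain ⟨N, hN⟩ : ∃ N, n * m = N := ⟨_, rfl⟩
      rw [Nat.succ_mul, hN] at hle
      rcases lt_trichotomy ((a : ℕ)) ((b : ℕ)) with h | h | h
      · -- a < b : step up
        have hdvd : m ∣ (b : ℕ) - (a : ℕ) := (Nat.modEq_iff_dvd' h.le).mp hab
        have hge : m ≤ (b : ℕ) - (a : ℕ) := Nat.le_of_dvd (by omega) hdvd
        have hck : (a : ℕ) + m < k := by have := b.isLt; omega
        set c : Fin k := ⟨(a : ℕ) + m, hck⟩ with hcdef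
        have h1 : 0 < M a c := hup a c rfl
        have h2 : 0 < (M ^ n) c b := by
          apply ih
          · show ((a : ℕ) + m) % m = (b : ℕ) % m
            rw [Nat.add_mod_right]; exact hab
          · show ((a : ℕ) + m - (b : ℕ)) + ((b : ℕ) - ((a : ℕ) + m)) ≤ n * m
            rw [hN]; omega
        exact lt_of_lt_of_le (mul_pos h1 h2) (hple n a b c)
      · -- a = b : stay
        have h2 : 0 < (M ^ n) a b := by
          apply ih a b hab
          have hz : ((a : ℕ) - (b : ℕ)) + ((b : ℕ) - (a : ℕ)) = 0 := by omega
          rw [hz]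
          exact Nat.zero_le _
        exact lt_of_lt_of_le (mul_pos (hdiag a) h2) (hple n a b a)
      · -- b < a : step down
        have hdvd : m ∣ (a : ℕ) - (b : ℕ) := (Nat.modEq_iff_dvd' h.le).mp hab.symm
        have hge : m ≤ (a : ℕ) - (b : ℕ) := Nat.le_of_dvd (by omega) hdvd
        have hck : (a : ℕ) - m < k := by have := a.isLt; omega
        set c : Fin k := ⟨(a : ℕ) - m, hck⟩ with hcdef
        have h1 : 0 < M a c := by
          apply hdown a c
          show (a : ℕ) = (a : ℕ) - m + m
          omega
        have h2 : 0 < (M ^ n) c b := by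
          apply ih
          · show ((a : ℕ) - m) % m = (b : ℕ) % m
            have hrw : (a : ℕ) = ((a : ℕ) - m) + m := by omega
            rw [hrw, Nat.add_mod_right] at hab
            exact hab
          · show ((a : ℕ) - m - (b : ℕ)) + ((b : ℕ) - ((a : ℕ) - m)) ≤ n * m
            rw [hN]; omega
        exact lt_of_lt_of_le (mul_pos h1 h2) (hple n a b c)
  apply key k i j hij
  obtain ⟨N, hN⟩ : ∃ N, k * m = N := ⟨_, rfl⟩
  have hkm : k ≤ k * m := Nat.le_mul_of_pos_right k (by omega)
  rw [hN] at hkm ⊢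
  have := i.isLt
  have := j.isLt
  omega
end

section
/- Let P be a square matrix with all entries strictly positive. Then there exists a constant C > 0 such that for all n ≥ 1, sp(P)ⁿ ≤ ‖Pⁿ‖ ≤ C·sp(P)ⁿ, where ‖M‖ is the sum of the entries of M and sp is the spectral radius. -/
open Finset

/-- The entrywise `L¹` norm of a matrix: the sum of absolute values of the entries. -/
noncomputable def l1Norm {R C : Type*} [Fintype R] [Fintype C] (M : Matrix R C ℝ) : ℝ :=
  ∑ x, ∑ y, |M x y|

/-- The spectral radius of a real square matrix: the supremum of the moduli of its
complex eigenvalues. -/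
noncomputable def specRad {n : Type*} [Fintype n] [DecidableEq n]
    (M : Matrix n n ℝ) : ℝ :=
  sSup ((fun z : ℂ => ‖z‖) '' spectrum ℂ (M.map ((↑) : ℝ → ℂ)))

open Filter Topology

attribute [local instance] Matrix.linftyOpNormedRing Matrix.linftyOpNormedAlgebra

section Aux

variable {m : Type*} [Fintype m] [DecidableEq m] [Nonempty m]

lemma mapPow (P : Matrix m m ℝ) (n : ℕ) :
    (P.map ((↑) : ℝ → ℂ)) ^ n = (P ^ n).map ((↑) : ℝ → ℂ) :=
  (map_pow (Complex.ofRealHom.mapMatrix : Matrix m m ℝ →+* Matrix m m ℂ) P n).symm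

lemma specRad_eq_toReal (P : Matrix m m ℝ) :
    specRad P = (spectralRadius ℂ (P.map ((↑) : ℝ → ℂ))).toReal := by
  obtain ⟨z, hz, hz2⟩ := spectrum.exists_nnnorm_eq_spectralRadius (P.map ((↑) : ℝ → ℂ))
  have h1 : (spectralRadius ℂ (P.map ((↑) : ℝ → ℂ))).toReal = ‖z‖ := by
    rw [← hz2]; simp
  rw [h1, specRad]
  refine IsGreatest.csSup_eq ⟨⟨z, hz, rfl⟩, ?_⟩
  rintro y ⟨w, hw, rfl⟩
  have h2 : (‖w‖₊ : ENNReal) ≤ spectralRadius ℂ (P.map ((↑) : ℝ → ℂ)) :=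
    le_iSup₂ (f := fun k (_ : k ∈ spectrum ℂ (P.map ((↑) : ℝ → ℂ))) => (‖k‖₊ : ENNReal)) w hw
  rw [← hz2, ENNReal.coe_le_coe] at h2
  calc (fun z : ℂ => ‖z‖) w = ‖w‖ := rfl
    _ ≤ ‖z‖ := h2

lemma pow_entries_pos (P : Matrix m m ℝ) (hP : ∀ i j, 0 < P i j) :
    ∀ n, 1 ≤ n → ∀ i j, 0 < (P ^ n) i j := by
  intro n hn
  induction n with
  | zero => omega
  | succ k ih =>
    rcases Nat.lt_or_ge 1 (k + 1) with h | h
    · intro i j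
      have hk : 1 ≤ k := by omega
      rw [pow_succ, Matrix.mul_apply]
      exact Finset.sum_pos (fun c _ => mul_pos (ih hk i c) (hP c j)) univ_nonempty
    · intro i j
      have : k = 0 := by omega
      subst this
      simpa [pow_one] using hP i j

lemma pow_entries_nonneg (P : Matrix m m ℝ) (hP : ∀ i j, 0 < P i j) :
    ∀ n, ∀ i j, 0 ≤ (P ^ n) i j := by
  intro n i j
  rcases Nat.eq_zero_or_pos n with rfl | hn
  · rw [pow_zero, Matrix.one_apply]
    split <;> norm_num
  · exact (pow_entries_pos P hP n hn i j).le

lemma l1Norm_eq_sum (M : Matrix m m ℝ) (hM : ∀ i j, 0 ≤ M i j) :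
    l1Norm M = ∑ i, ∑ j, M i j :=
  Finset.sum_congr rfl fun i _ => Finset.sum_congr rfl fun j _ => abs_of_nonneg (hM i j)

lemma l1Norm_mul_le (A B : Matrix m m ℝ) (hA : ∀ i j, 0 ≤ A i j) (hB : ∀ i j, 0 ≤ B i j) :
    l1Norm (A * B) ≤ l1Norm A * l1Norm B := by
  have hAB : ∀ i j, 0 ≤ (A * B) i j := fun i j => by
    rw [Matrix.mul_apply]
    exact Finset.sum_nonneg fun k _ => mul_nonneg (hA i k) (hB k j)
  rw [l1Norm_eq_sum _ hAB, l1Norm_eq_sum _ hA, l1Norm_eq_sum _ hB]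
  have key : ∑ i, ∑ j, (A * B) i j = ∑ k, (∑ i, A i k) * ∑ j, B k j := by
    simp only [Matrix.mul_apply]
    calc ∑ i, ∑ j, ∑ k, A i k * B k j
        = ∑ i, ∑ k, ∑ j, A i k * B k j :=
          Finset.sum_congr rfl fun i _ => Finset.sum_comm
      _ = ∑ i, ∑ k, A i k * ∑ j, B k j := by simp [Finset.mul_sum]
      _ = ∑ k, ∑ i, A i k * ∑ j, B k j := Finset.sum_comm
      _ = ∑ k, (∑ i, A i k) * ∑ j, B k j := by simp [Finset.sum_mul]
  rw [key]
  have col_le : ∀ k, (∑ i, A i k) ≤ ∑ i, ∑ j, A i j := fun k =>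
    Finset.sum_le_sum fun i _ =>
      Finset.single_le_sum (fun j _ => hA i j) (Finset.mem_univ k)
  calc ∑ k, (∑ i, A i k) * ∑ j, B k j
      ≤ ∑ k, (∑ i, ∑ j, A i j) * ∑ j, B k j :=
        Finset.sum_le_sum fun k _ =>
          mul_le_mul_of_nonneg_right (col_le k)
            (Finset.sum_nonneg fun j _ => hB k j)
    _ = (∑ i, ∑ j, A i j) * ∑ k, ∑ j, B k j := by rw [← Finset.mul_sum]

/-- Row comparison for powers of a positive matrix. -/
lemma row_comp (P : Matrix m m ℝ) (hP : ∀ i j, 0 < P i j) {lo hi : ℝ} (hlo0 : 0 < lo)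
    (hlo : ∀ i j, lo ≤ P i j) (hhi : ∀ i j, P i j ≤ hi)
    {p : ℕ} (hp : 1 ≤ p) (i i' j : m) :
    (P ^ p) i j ≤ hi / lo * (P ^ p) i' j := by
  have hhi0 : 0 < hi := (hP i j).trans_le (hhi i j)
  obtain ⟨q, rfl⟩ : ∃ q, p = 1 + q := ⟨p - 1, by omega⟩
  have hq := pow_entries_nonneg P hP q
  rw [pow_add, pow_one, Matrix.mul_apply, Matrix.mul_apply, Finset.mul_sum]
  refine Finset.sum_le_sum fun k _ => ?_
  have h1 : P i k ≤ hi / lo * P i' k := by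
    have h2 : hi / lo * lo ≤ hi / lo * P i' k :=
      mul_le_mul_of_nonneg_left (hlo i' k) (by positivity)
    rw [div_mul_cancel₀ _ hlo0.ne'] at h2
    exact (hhi i k).trans h2
  calc P i k * (P ^ q) k j ≤ hi / lo * P i' k * (P ^ q) k j :=
        mul_le_mul_of_nonneg_right h1 (hq k j)
    _ = hi / lo * (P i' k * (P ^ q) k j) := by ring

/-- Column comparison for powers of a positive matrix. -/
lemma col_comp (P : Matrix m m ℝ) (hP : ∀ i j, 0 < P i j) {lo hi : ℝ} (hlo0 : 0 < lo)
    (hlo : ∀ i j, lo ≤ P i j) (hhi : ∀ i j, P i j ≤ hi)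
    {p : ℕ} (hp : 1 ≤ p) (i j j' : m) :
    (P ^ p) i j ≤ hi / lo * (P ^ p) i j' := by
  have hhi0 : 0 < hi := (hP i j).trans_le (hhi i j)
  obtain ⟨q, rfl⟩ : ∃ q, p = q + 1 := ⟨p - 1, by omega⟩
  have hq := pow_entries_nonneg P hP q
  rw [pow_succ, Matrix.mul_apply, Matrix.mul_apply, Finset.mul_sum]
  refine Finset.sum_le_sum fun k _ => ?_
  have h1 : P k j ≤ hi / lo * P k j' := by
    have h2 : hi / lo * lo ≤ hi / lo * P k j' :=
      mul_le_mul_of_nonneg_left (hlo k j') (by positivity)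
    rw [div_mul_cancel₀ _ hlo0.ne'] at h2
    exact (hhi k j).trans h2
  calc (P ^ q) i k * P k j ≤ (P ^ q) i k * (hi / lo * P k j') :=
        mul_le_mul_of_nonneg_left h1 (hq i k)
    _ = hi / lo * ((P ^ q) i k * P k j') := by ring

/-- Every entry of `P ^ p` is at least a fixed fraction of the total sum. -/
lemma l1Norm_le_entry (P : Matrix m m ℝ) (hP : ∀ i j, 0 < P i j) {lo hi : ℝ} (hlo0 : 0 < lo)
    (hlo : ∀ i j, lo ≤ P i j) (hhi : ∀ i j, P i j ≤ hi)
    {p : ℕ} (hp : 1 ≤ p) (i j : m) :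
    l1Norm (P ^ p) ≤ (Fintype.card m : ℝ) ^ 2 * (hi / lo) ^ 2 * (P ^ p) i j := by
  have hK : (0:ℝ) < hi / lo := by
    have : lo ≤ hi := (hlo (Classical.arbitrary m) (Classical.arbitrary m)).trans
      (hhi (Classical.arbitrary m) (Classical.arbitrary m))
    have hhi0 : 0 < hi := hlo0.trans_le this
    positivity
  have hent : ∀ i' j', (P ^ p) i' j' ≤ (hi / lo) ^ 2 * (P ^ p) i j := fun i' j' => by
    calc (P ^ p) i' j' ≤ hi / lo * (P ^ p) i j' :=
          row_comp P hP hlo0 hlo hhi hp i' i j'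
      _ ≤ hi / lo * (hi / lo * (P ^ p) i j) :=
          mul_le_mul_of_nonneg_left (col_comp P hP hlo0 hlo hhi hp i j' j) hK.le
      _ = (hi / lo) ^ 2 * (P ^ p) i j := by ring
  rw [l1Norm_eq_sum _ (pow_entries_nonneg P hP p)]
  calc ∑ i', ∑ j', (P ^ p) i' j'
      ≤ ∑ _i' : m, ∑ _j' : m, (hi / lo) ^ 2 * (P ^ p) i j :=
        Finset.sum_le_sum fun i' _ => Finset.sum_le_sum fun j' _ => hent i' j'
    _ = (Fintype.card m : ℝ) ^ 2 * (hi / lo) ^ 2 * (P ^ p) i j := by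
        simp [Finset.sum_const, Finset.card_univ]
        ring

/-- Comparison between the `linfty` operator norm of the complexification and `l1Norm`. -/
lemma norm_le_l1Norm (M : Matrix m m ℝ) : ‖M.map ((↑) : ℝ → ℂ)‖ ≤ l1Norm M := by
  rw [Matrix.linfty_opNorm_def]
  have h : ((Finset.univ : Finset m).sup fun i => ∑ j, ‖(M.map ((↑) : ℝ → ℂ)) i j‖₊)
      ≤ ∑ i, ∑ j, ‖M i j‖₊ := by
    refine Finset.sup_le fun i _ => ?_
    refine le_trans (le_of_eq ?_) (Finset.single_le_sum
      (f := fun i => ∑ j, ‖M i j‖₊) (fun i _ => zero_le) (Finset.mem_univ i))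
    simp [Matrix.map_apply]
  calc ((Finset.univ.sup fun i => ∑ j, ‖(M.map ((↑) : ℝ → ℂ)) i j‖₊ : NNReal) : ℝ)
      ≤ ((∑ i, ∑ j, ‖M i j‖₊ : NNReal) : ℝ) := by exact_mod_cast h
    _ = l1Norm M := by
        simp [l1Norm, NNReal.coe_sum, Real.norm_eq_abs]

lemma l1Norm_le_card_mul_norm (M : Matrix m m ℝ) :
    l1Norm M ≤ (Fintype.card m : ℝ) * ‖M.map ((↑) : ℝ → ℂ)‖ := by
  rw [Matrix.linfty_opNorm_def]
  have h : (∑ i, ∑ j, ‖M i j‖₊ : NNReal)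
      ≤ (Fintype.card m) • ((Finset.univ : Finset m).sup
        fun i => ∑ j, ‖(M.map ((↑) : ℝ → ℂ)) i j‖₊) := by
    rw [← Finset.card_univ, ← Finset.sum_const]
    refine Finset.sum_le_sum fun i _ => ?_
    refine le_trans (le_of_eq ?_) (Finset.le_sup (Finset.mem_univ i))
    simp [Matrix.map_apply]
  have h2 : l1Norm M = ((∑ i, ∑ j, ‖M i j‖₊ : NNReal) : ℝ) := by
    simp [l1Norm, NNReal.coe_sum, Real.norm_eq_abs]
  rw [h2]
  calc ((∑ i, ∑ j, ‖M i j‖₊ : NNReal) : ℝ)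
      ≤ (((Fintype.card m) • ((Finset.univ : Finset m).sup
          fun i => ∑ j, ‖(M.map ((↑) : ℝ → ℂ)) i j‖₊) : NNReal) : ℝ) := by exact_mod_cast h
    _ = (Fintype.card m : ℝ) * _ := by
        simp [nsmul_eq_mul]

end Aux

/-- The key analytic lemma: a sequence which is both sub- and (up to a constant)
super-multiplicative, whose `n`-th roots converge to `ρ`, is comparable to `ρ ^ n`. -/
lemma key_bounds (a : ℕ → ℝ) (ρ : ℝ) (hρ : 0 ≤ ρ)
    (hpos : ∀ n, 1 ≤ n → 0 < a n)
    (hsub : ∀ p q, 1 ≤ p → 1 ≤ q → a (p + q) ≤ a p * a q)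
    (ε : ℝ) (hε : 0 < ε)
    (hsup : ∀ p q, 1 ≤ p → 1 ≤ q → ε * (a p * a q) ≤ a (p + q))
    (hlim : Filter.Tendsto (fun k : ℕ => a k ^ (1 / (k : ℝ))) Filter.atTop (nhds ρ)) :
    ∀ n, 1 ≤ n → ρ ^ n ≤ a n ∧ a n ≤ ε⁻¹ * ρ ^ n := by
  -- upper and lower iterated bounds
  have hub : ∀ n k, 1 ≤ n → 1 ≤ k → a (n * k) ≤ a n ^ k := by
    intro n k hn hk
    induction k with
    | zero => omega
    | succ l ih =>
      rcases Nat.eq_zero_or_pos l with rfl | hl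
      · simpa using le_refl (a n)
      · calc a (n * (l + 1)) = a (n * l + n) := by ring_nf
          _ ≤ a (n * l) * a n := hsub _ _ (Nat.one_le_iff_ne_zero.2 (Nat.mul_ne_zero (by omega) (by omega))) hn
          _ ≤ a n ^ l * a n := mul_le_mul_of_nonneg_right (ih hl)
              (hpos n hn).le
          _ = a n ^ (l + 1) := by ring
  have hlb : ∀ n k, 1 ≤ n → 1 ≤ k → (ε * a n) ^ k ≤ ε * a (n * k) := by
    intro n k hn hk
    induction k with
    | zero => omega
    | succ l ih =>
      rcases Nat.eq_zero_or_pos l with rfl | hl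
      · simpa using le_refl (ε * a n)
      · have hnl : 1 ≤ n * l := Nat.one_le_iff_ne_zero.2 (Nat.mul_ne_zero (by omega) (by omega))
        calc (ε * a n) ^ (l + 1) = (ε * a n) ^ l * (ε * a n) := by ring
          _ ≤ ε * a (n * l) * (ε * a n) := mul_le_mul_of_nonneg_right (ih hl)
              (mul_nonneg hε.le (hpos n hn).le)
          _ = ε * (ε * (a (n * l) * a n)) := by ring
          _ ≤ ε * a (n * l + n) := mul_le_mul_of_nonneg_left
              (hsup _ _ hnl hn) hε.le
          _ = ε * a (n * (l + 1)) := by ring_nf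
  intro n hn
  have hn0 : (0:ℝ) < n := by exact_mod_cast hn
  have han := hpos n hn
  -- the subsequence k ↦ n * k
  have hmono : Filter.Tendsto (fun k : ℕ => n * k) Filter.atTop Filter.atTop :=
    Filter.tendsto_atTop_mono (fun k => Nat.le_mul_of_pos_left k (by omega))
      Filter.tendsto_id
  have hsubseq : Filter.Tendsto (fun k : ℕ => a (n * k) ^ (1 / ((n * k : ℕ) : ℝ)))
      Filter.atTop (nhds ρ) := hlim.comp hmono
  constructor
  · -- ρ ^ n ≤ a n
    have hle : ∀ k : ℕ, 1 ≤ k → a (n * k) ^ (1 / ((n * k : ℕ) : ℝ)) ≤ a n ^ (1 / (n : ℝ)) := by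
      intro k hk
      have hk0 : (0:ℝ) < k := by exact_mod_cast hk
      have hnk : 1 ≤ n * k := Nat.one_le_iff_ne_zero.2 (Nat.mul_ne_zero (by omega) (by omega))
      have h1 : a (n * k) ^ (1 / ((n * k : ℕ) : ℝ)) ≤ (a n ^ k) ^ (1 / ((n * k : ℕ) : ℝ)) :=
        Real.rpow_le_rpow (hpos _ hnk).le (hub n k hn hk) (by positivity)
      refine h1.trans (le_of_eq ?_)
      rw [← Real.rpow_natCast (a n) k, ← Real.rpow_mul han.le]
      congr 1
      push_cast
      field_simp
    have : ρ ≤ a n ^ (1 / (n : ℝ)) :=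
      le_of_tendsto hsubseq (Filter.eventually_atTop.2 ⟨1, hle⟩)
    calc ρ ^ n ≤ (a n ^ (1 / (n : ℝ))) ^ n := pow_le_pow_left₀ hρ this n
      _ = a n := by
        rw [← Real.rpow_natCast (a n ^ (1 / (n : ℝ))) n, ← Real.rpow_mul han.le]
        field_simp
        simp
  · -- a n ≤ ε⁻¹ * ρ ^ n
    have hεlim : Filter.Tendsto (fun k : ℕ => ε ^ (1 / ((n * k : ℕ) : ℝ)))
        Filter.atTop (nhds 1) := by
      have h0 : Filter.Tendsto (fun k : ℕ => 1 / ((n * k : ℕ) : ℝ)) Filter.atTop (nhds 0) :=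
        tendsto_one_div_atTop_nhds_zero_nat.comp hmono
      have hc : ContinuousAt (fun x : ℝ => ε ^ x) 0 :=
        Real.continuousAt_const_rpow hε.ne'
      have := hc.tendsto.comp h0
      simpa [Real.rpow_zero, Function.comp_def] using this
    have hglim : Filter.Tendsto
        (fun k : ℕ => ε ^ (1 / ((n * k : ℕ) : ℝ)) * a (n * k) ^ (1 / ((n * k : ℕ) : ℝ)))
        Filter.atTop (nhds ρ) := by
      have := hεlim.mul hsubseq
      simpa using this
    have hge : ∀ k : ℕ, 1 ≤ k →
        (ε * a n) ^ (1 / (n : ℝ)) ≤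
          ε ^ (1 / ((n * k : ℕ) : ℝ)) * a (n * k) ^ (1 / ((n * k : ℕ) : ℝ)) := by
      intro k hk
      have hk0 : (0:ℝ) < k := by exact_mod_cast hk
      have hnk : 1 ≤ n * k := Nat.one_le_iff_ne_zero.2 (Nat.mul_ne_zero (by omega) (by omega))
      have h1 : ((ε * a n) ^ k) ^ (1 / ((n * k : ℕ) : ℝ))
          ≤ (ε * a (n * k)) ^ (1 / ((n * k : ℕ) : ℝ)) :=
        Real.rpow_le_rpow (by positivity) (hlb n k hn hk) (by positivity)
      have h2 : ((ε * a n) ^ k) ^ (1 / ((n * k : ℕ) : ℝ)) = (ε * a n) ^ (1 / (n : ℝ)) := by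
        rw [← Real.rpow_natCast (ε * a n) k, ← Real.rpow_mul (by positivity)]
        congr 1
        push_cast
        field_simp
      have h3 : (ε * a (n * k)) ^ (1 / ((n * k : ℕ) : ℝ))
          = ε ^ (1 / ((n * k : ℕ) : ℝ)) * a (n * k) ^ (1 / ((n * k : ℕ) : ℝ)) :=
        Real.mul_rpow hε.le (hpos _ hnk).le
      rw [← h2, ← h3]
      exact h1
    have hfin : (ε * a n) ^ (1 / (n : ℝ)) ≤ ρ :=
      ge_of_tendsto hglim (Filter.eventually_atTop.2 ⟨1, hge⟩)
    have h4 : ε * a n ≤ ρ ^ n := by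
      calc ε * a n = ((ε * a n) ^ (1 / (n : ℝ))) ^ n := by
            rw [← Real.rpow_natCast ((ε * a n) ^ (1 / (n : ℝ))) n,
              ← Real.rpow_mul (by positivity)]
            field_simp
            simp
        _ ≤ ρ ^ n := pow_le_pow_left₀ (by positivity) hfin n
    calc a n = ε⁻¹ * (ε * a n) := by field_simp
      _ ≤ ε⁻¹ * ρ ^ n := mul_le_mul_of_nonneg_left h4 (by positivity)

/-- Let `P` be a square matrix with all entries strictly positive.  Then there is a
constant `C > 0` such that for all `n ≥ 1`,
`sp(P)ⁿ ≤ ‖Pⁿ‖ ≤ C · sp(P)ⁿ`, where `‖M‖` is the sum of the entries of `M` and `sp`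
is the spectral radius. -/
theorem l1_norm_pow_comparable_spectral_radius
    {m : Type*} [Fintype m] [DecidableEq m] [Nonempty m]
    (P : Matrix m m ℝ) (hP : ∀ i j, 0 < P i j) :
    ∃ C : ℝ, 0 < C ∧ ∀ n : ℕ, 1 ≤ n →
      specRad P ^ n ≤ l1Norm (P ^ n) ∧ l1Norm (P ^ n) ≤ C * specRad P ^ n := by
  classical
  set Q : Matrix m m ℂ := P.map ((↑) : ℝ → ℂ) with hQ
  set L : ENNReal := spectralRadius ℂ Q with hL
  set ρ : ℝ := L.toReal with hρdef
  have hρ0 : 0 ≤ ρ := ENNReal.toReal_nonneg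
  have hspec : specRad P = ρ := specRad_eq_toReal P
  set a : ℕ → ℝ := fun n => l1Norm (P ^ n) with ha
  -- positivity of a
  have hcard : (0:ℝ) < (Fintype.card m : ℝ) := by
    have := Fintype.card_pos (α := m); exact_mod_cast this
  have hpos : ∀ n, 1 ≤ n → 0 < a n := by
    intro n hn
    rw [ha]
    simp only
    rw [l1Norm_eq_sum _ (pow_entries_nonneg P hP n)]
    exact Finset.sum_pos (fun i _ => Finset.sum_pos
      (fun j _ => pow_entries_pos P hP n hn i j) univ_nonempty) univ_nonempty
  -- submultiplicativity
  have hsub : ∀ p q, 1 ≤ p → 1 ≤ q → a (p + q) ≤ a p * a q := by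
    intro p q hp hq
    have : P ^ (p + q) = P ^ p * P ^ q := pow_add P p q
    simp only [ha, this]
    exact l1Norm_mul_le _ _ (pow_entries_nonneg P hP p) (pow_entries_nonneg P hP q)
  -- min and max entries
  obtain ⟨⟨i₀, j₀⟩, -, hmin⟩ := Finset.exists_min_image (Finset.univ : Finset (m × m))
    (fun ij => P ij.1 ij.2) ⟨(Classical.arbitrary m, Classical.arbitrary m), Finset.mem_univ _⟩
  obtain ⟨⟨i₁, j₁⟩, -, hmax⟩ := Finset.exists_max_image (Finset.univ : Finset (m × m))
    (fun ij => P ij.1 ij.2) ⟨(Classical.arbitrary m, Classical.arbitrary m), Finset.mem_univ _⟩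
  set lo := P i₀ j₀ with hlodef
  set hi := P i₁ j₁ with hhidef
  have hlo0 : 0 < lo := hP i₀ j₀
  have hlo : ∀ i j, lo ≤ P i j := fun i j => hmin (i, j) (Finset.mem_univ _)
  have hhi : ∀ i j, P i j ≤ hi := fun i j => hmax (i, j) (Finset.mem_univ _)
  set D : ℝ := (Fintype.card m : ℝ) ^ 2 * (hi / lo) ^ 2 with hD
  have hK : (0:ℝ) < hi / lo := by
    have h1 : lo ≤ hi := (hlo i₁ j₁).trans (le_refl _)
    have : 0 < hi := hlo0.trans_le h1
    positivity
  have hD0 : 0 < D := by positivity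
  -- lower bound for entries
  have hentry : ∀ p, 1 ≤ p → ∀ i j, a p / D ≤ (P ^ p) i j := by
    intro p hp i j
    have := l1Norm_le_entry P hP hlo0 hlo hhi hp i j
    rw [div_le_iff₀ hD0]
    calc a p ≤ D * (P ^ p) i j := this
      _ = (P ^ p) i j * D := by ring
  -- supermultiplicativity
  set ε : ℝ := 1 / D ^ 2 with hεdef
  have hε : 0 < ε := by positivity
  have hsup : ∀ p q, 1 ≤ p → 1 ≤ q → ε * (a p * a q) ≤ a (p + q) := by
    intro p q hp hq
    have hpq : 1 ≤ p + q := by omega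
    have h1 : a p / D * (a q / D) ≤ (P ^ p) i₀ j₀ * (P ^ q) j₀ j₀ :=
      mul_le_mul (hentry p hp i₀ j₀) (hentry q hq j₀ j₀)
        (div_nonneg (hpos q hq).le hD0.le) (pow_entries_nonneg P hP p i₀ j₀)
    have h2 : (P ^ p) i₀ j₀ * (P ^ q) j₀ j₀ ≤ (P ^ (p + q)) i₀ j₀ := by
      rw [pow_add, Matrix.mul_apply]
      exact Finset.single_le_sum
        (f := fun k => (P ^ p) i₀ k * (P ^ q) k j₀)
        (fun k _ => mul_nonneg (pow_entries_nonneg P hP p i₀ k)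
          (pow_entries_nonneg P hP q k j₀)) (Finset.mem_univ j₀)
    have h3 : (P ^ (p + q)) i₀ j₀ ≤ a (p + q) := by
      rw [ha]
      simp only
      rw [l1Norm_eq_sum _ (pow_entries_nonneg P hP (p + q))]
      calc (P ^ (p + q)) i₀ j₀ ≤ ∑ j, (P ^ (p + q)) i₀ j :=
            Finset.single_le_sum (fun j _ => pow_entries_nonneg P hP (p + q) i₀ j)
              (Finset.mem_univ j₀)
        _ ≤ ∑ i, ∑ j, (P ^ (p + q)) i j :=
            Finset.single_le_sum (f := fun i => ∑ j, (P ^ (p + q)) i j)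
              (fun i _ => Finset.sum_nonneg fun j _ => pow_entries_nonneg P hP (p + q) i j)
              (Finset.mem_univ i₀)
    calc ε * (a p * a q) = a p / D * (a q / D) := by rw [hεdef]; ring
      _ ≤ (P ^ p) i₀ j₀ * (P ^ q) j₀ j₀ := h1
      _ ≤ (P ^ (p + q)) i₀ j₀ := h2
      _ ≤ a (p + q) := h3
  -- Gelfand's formula
  have hLne : L ≠ ⊤ := by
    refine ne_top_of_le_ne_top ?_ (spectrum.spectralRadius_le_nnnorm Q)
    exact ENNReal.coe_ne_top
  have gel : Filter.Tendsto (fun k : ℕ => ((‖Q ^ k‖₊ : ENNReal) ^ (1 / (k : ℝ))))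
      Filter.atTop (nhds L) := spectrum.pow_nnnorm_pow_one_div_tendsto_nhds_spectralRadius Q
  have gelR : Filter.Tendsto (fun k : ℕ => ‖Q ^ k‖ ^ (1 / (k : ℝ)))
      Filter.atTop (nhds ρ) := by
    have h := (ENNReal.tendsto_toReal hLne).comp gel
    have heq : (ENNReal.toReal ∘ fun k : ℕ => ((‖Q ^ k‖₊ : ENNReal) ^ (1 / (k : ℝ))))
        = fun k : ℕ => ‖Q ^ k‖ ^ (1 / (k : ℝ)) := by
      funext k
      simp only [Function.comp_apply, ← ENNReal.toReal_rpow]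
      simp
    rw [hρdef]
    rwa [heq] at h
  -- squeeze: a k ^ (1/k) → ρ
  have hcardlim : Filter.Tendsto (fun k : ℕ => (Fintype.card m : ℝ) ^ (1 / (k : ℝ)))
      Filter.atTop (nhds 1) := by
    have hc : ContinuousAt (fun x : ℝ => (Fintype.card m : ℝ) ^ x) 0 :=
      Real.continuousAt_const_rpow hcard.ne'
    have := hc.tendsto.comp tendsto_one_div_atTop_nhds_zero_nat
    simpa [Real.rpow_zero, Function.comp_def] using this
  have hQpow : ∀ k : ℕ, Q ^ k = (P ^ k).map ((↑) : ℝ → ℂ) := fun k => mapPow P k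
  have hlim : Filter.Tendsto (fun k : ℕ => a k ^ (1 / (k : ℝ))) Filter.atTop (nhds ρ) := by
    have hupper : Filter.Tendsto
        (fun k : ℕ => (Fintype.card m : ℝ) ^ (1 / (k : ℝ)) * ‖Q ^ k‖ ^ (1 / (k : ℝ)))
        Filter.atTop (nhds ρ) := by
      have := hcardlim.mul gelR
      simpa using this
    refine tendsto_of_tendsto_of_tendsto_of_le_of_le' gelR hupper ?_ ?_
    · filter_upwards [Filter.eventually_ge_atTop 1] with k hk
      have h1 : ‖Q ^ k‖ ≤ a k := by
        rw [hQpow k]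
        exact norm_le_l1Norm (P ^ k)
      exact Real.rpow_le_rpow (norm_nonneg _) h1 (by positivity)
    · filter_upwards [Filter.eventually_ge_atTop 1] with k hk
      have h1 : a k ≤ (Fintype.card m : ℝ) * ‖Q ^ k‖ := by
        have := l1Norm_le_card_mul_norm (P ^ k)
        rwa [← hQpow k] at this
      calc a k ^ (1 / (k : ℝ)) ≤ ((Fintype.card m : ℝ) * ‖Q ^ k‖) ^ (1 / (k : ℝ)) :=
            Real.rpow_le_rpow (hpos k hk).le h1 (by positivity)
        _ = (Fintype.card m : ℝ) ^ (1 / (k : ℝ)) * ‖Q ^ k‖ ^ (1 / (k : ℝ)) :=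
            Real.mul_rpow hcard.le (norm_nonneg _)
  -- conclude
  obtain key := key_bounds a ρ hρ0 hpos hsub ε hε hsup hlim
  refine ⟨ε⁻¹, by positivity, fun n hn => ?_⟩
  rw [hspec]
  exact key n hn
end
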